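/- Fix h ∈ Z^n and define the centroid h̄ = (h̄_0,...,h̄_n) with h̄_i = h_i + i/(n+1) (and h_0 = 0). Let G_h be the graph on {0,...,n} with edges all pairs (i,j) such that |h̄_i - h̄_j| < 1. Then for any graph G on {0,...,n}: π(h, Id) ⊆ Π_G if and only if G ⊆ G_h. -/

import Mathlib

open scoped Classical
open MeasureTheory

noncomputable section

/-- Extension of a vector `(x_1, …, x_n)` to `(x_0, x_1, …, x_n)` with `x_0 = 0`. -/
def extv {α : Type*} [Zero α] {n : ℕ} (x : Fin n → α) : Fin (n + 1) → α :=
  Fin.cases 0 x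

/-- The polytope `Π_G = {(x_1,…,x_n) : x_0 = 0 and |x_i - x_j| ≤ 1 for all edges (i,j) of G}`
associated with a graph `G` on `{0, …, n}`. -/
def PiG (n : ℕ) (G : SimpleGraph (Fin (n + 1))) : Set (Fin n → ℝ) :=
  {x | ∀ i j : Fin (n + 1), G.Adj i j → |extv x i - extv x j| ≤ 1}

/-- The polytope `π(h, σ)`: the closure of the set of points `(x_1, …, x_n)` whose integer
parts are prescribed by `h` and whose fractional parts are positive and increase in the
order prescribed by `σ`. -/
def piPoly (n : ℕ) (h : Fin n → ℤ) (σ : Equiv.Perm (Fin n)) : Set (Fin n → ℝ) :=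
  closure {x : Fin n → ℝ | (∀ i, ⌊x i⌋ = h i) ∧ (∀ k, 0 < Int.fract (x (σ⁻¹ k))) ∧
    StrictMono fun k => Int.fract (x (σ⁻¹ k))}

/-- The centroid `h̄` of `h ∈ ℤ^n`: `h̄_i = h_i + i/(n+1)`, with the convention `h_0 = 0`. -/
def cent (n : ℕ) (h : Fin n → ℤ) : Fin (n + 1) → ℝ :=
  fun i => (extv h i : ℤ) + (i : ℝ) / (n + 1)

/-- The graph `G_h` on `{0, …, n}` whose edges are the pairs `(i,j)` with `|h̄_i - h̄_j| < 1`. -/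
def Gh (n : ℕ) (h : Fin n → ℤ) : SimpleGraph (Fin (n + 1)) where
  Adj i j := i ≠ j ∧ |cent n h i - cent n h j| < 1
  symm := ⟨fun i j hij => ⟨hij.1.symm, by rw [abs_sub_comm]; exact hij.2⟩⟩
  loopless := ⟨fun i hi => hi.1 rfl⟩

end

section AuxProof

private lemma aux1 (d : ℤ) (s : ℝ) (hs0 : -1 < s) (hs1 : s < 0)
    (hd : |(d : ℝ) + s| ≤ 1) : d = 0 ∨ d = 1 := by
  rw [abs_le] at hd
  have h1 : (-1 : ℝ) < (d : ℝ) := by linarith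
  have h2 : (d : ℝ) < 2 := by linarith
  have h1' : (-1 : ℤ) < d := by exact_mod_cast h1
  have h2' : d < 2 := by exact_mod_cast h2
  omega

private lemma aux2 (d : ℤ) (s : ℝ) (hs0 : -1 < s) (hs1 : s < 0)
    (hd : d = 0 ∨ d = 1) : |(d : ℝ) + s| < 1 := by
  rw [abs_lt]
  rcases hd with rfl | rfl <;> push_cast <;> constructor <;> linarith

private lemma key_le_iff {n : ℕ} (h : Fin n → ℤ) (f : Fin (n + 1) → ℝ)
    (hm : StrictMono f) (h0 : ∀ k, 0 ≤ f k) (h1 : ∀ k, f k < 1)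
    {i j : Fin (n + 1)} (hij : i < j) :
    |(((extv h i : ℤ) : ℝ) + f i) - (((extv h j : ℤ) : ℝ) + f j)| ≤ 1 ↔
      (extv h i - extv h j = 0 ∨ extv h i - extv h j = 1) := by
  have hs0 : -1 < f i - f j := by have := h0 i; have := h1 j; linarith
  have hs1 : f i - f j < 0 := by have := hm hij; linarith
  have he : (((extv h i : ℤ) : ℝ) + f i) - (((extv h j : ℤ) : ℝ) + f j)
      = ((extv h i - extv h j : ℤ) : ℝ) + (f i - f j) := by push_cast; ring
  rw [he]
  exact ⟨aux1 _ _ hs0 hs1, fun hd => (aux2 _ _ hs0 hs1 hd).le⟩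

private lemma key_lt_iff {n : ℕ} (h : Fin n → ℤ) (f : Fin (n + 1) → ℝ)
    (hm : StrictMono f) (h0 : ∀ k, 0 ≤ f k) (h1 : ∀ k, f k < 1)
    {i j : Fin (n + 1)} (hij : i < j) :
    |(((extv h i : ℤ) : ℝ) + f i) - (((extv h j : ℤ) : ℝ) + f j)| < 1 ↔
      (extv h i - extv h j = 0 ∨ extv h i - extv h j = 1) := by
  have hs0 : -1 < f i - f j := by have := h0 i; have := h1 j; linarith
  have hs1 : f i - f j < 0 := by have := hm hij; linarith
  have he : (((extv h i : ℤ) : ℝ) + f i) - (((extv h j : ℤ) : ℝ) + f j)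
      = ((extv h i - extv h j : ℤ) : ℝ) + (f i - f j) := by push_cast; ring
  rw [he]
  exact ⟨fun hd => aux1 _ _ hs0 hs1 hd.le, aux2 _ _ hs0 hs1⟩

/-- The `c` part of the centroid. -/
private noncomputable def centc (n : ℕ) : Fin (n + 1) → ℝ := fun i => (i : ℝ) / (n + 1)

private lemma centc_mono (n : ℕ) : StrictMono (centc n) := by
  intro a b hab
  have hpos : (0 : ℝ) < (n : ℝ) + 1 := by positivity
  exact div_lt_div_of_pos_right (by exact_mod_cast hab) hpos

private lemma centc_nonneg (n : ℕ) (i : Fin (n + 1)) : 0 ≤ centc n i := by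
  unfold centc; positivity

private lemma centc_lt_one (n : ℕ) (i : Fin (n + 1)) : centc n i < 1 := by
  have h1 : ((i : ℕ) : ℝ) < (n : ℝ) + 1 := by exact_mod_cast i.isLt
  have hpos : (0 : ℝ) < (n : ℝ) + 1 := by positivity
  unfold centc
  rw [div_lt_one hpos]
  exact h1

private lemma cent_eq_decomp (n : ℕ) (h : Fin n → ℤ) (i : Fin (n + 1)) :
    cent n h i = ((extv h i : ℤ) : ℝ) + centc n i := rfl

private lemma continuous_extv (n : ℕ) (i : Fin (n + 1)) :
    Continuous fun x : Fin n → ℝ => extv x i := by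
  induction i using Fin.cases with
  | zero => simpa [extv] using continuous_const
  | succ k => simpa [extv] using continuous_apply k

private lemma isClosed_PiG (n : ℕ) (G : SimpleGraph (Fin (n + 1))) :
    IsClosed (PiG n G) := by
  have : PiG n G =
      ⋂ (i : Fin (n + 1)) (j : Fin (n + 1)) (_ : G.Adj i j),
        {x : Fin n → ℝ | |extv x i - extv x j| ≤ 1} := by
    ext x
    simp [PiG, Set.mem_iInter]
  rw [this]
  refine isClosed_iInter fun i => isClosed_iInter fun j => isClosed_iInter fun _ => ?_
  exact isClosed_le (((continuous_extv n i).sub (continuous_extv n j)).abs) continuous_const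

end AuxProof

/-- For any graph `G` on `{0, …, n}`: `π(h, Id) ⊆ Π_G` iff `G` is a subgraph of `G_h`. -/
theorem piPoly_subset_PiG_iff_le_Gh (n : ℕ) (h : Fin n → ℤ) (G : SimpleGraph (Fin (n + 1))) :
    piPoly n h 1 ⊆ PiG n G ↔ G ≤ Gh n h := by
  constructor
  · -- forward: use the centroid point
    intro hsub i j hadj
    set xb : Fin n → ℝ := fun k => (h k : ℝ) + ((k : ℕ) + 1) / (n + 1) with hxb
    have hext : extv xb = cent n h := by
      funext i
      induction i using Fin.cases with
      | zero => simp [extv, cent, centc]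
      | succ k =>
        simp only [extv, Fin.cases_succ, cent, hxb, Fin.val_succ]
        push_cast
        ring
    have hr0 : ∀ k : Fin n, (0 : ℝ) < (((k : ℕ) : ℝ) + 1) / ((n : ℝ) + 1) := by
      intro k; positivity
    have hr1 : ∀ k : Fin n, (((k : ℕ) : ℝ) + 1) / ((n : ℝ) + 1) < 1 := by
      intro k
      have hpos : (0 : ℝ) < (n : ℝ) + 1 := by positivity
      rw [div_lt_one hpos]
      have : (k : ℕ) + 1 < n + 1 := Nat.succ_lt_succ k.isLt
      exact_mod_cast this
    have hfract : ∀ k : Fin n, Int.fract (xb k) = (((k : ℕ) : ℝ) + 1) / ((n : ℝ) + 1) := by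
      intro k
      rw [hxb]
      simp only [Int.fract_intCast_add]
      exact Int.fract_eq_self.mpr ⟨(hr0 k).le, hr1 k⟩
    have hmem : xb ∈ piPoly n h 1 := by
      apply subset_closure
      refine ⟨fun k => ?_, fun k => ?_, ?_⟩
      · rw [hxb]
        simp only [Int.floor_intCast_add]
        rw [Int.floor_eq_zero_iff.mpr ⟨(hr0 k).le, hr1 k⟩, add_zero]
      · simpa [hfract] using hr0 k
      · intro a b hab
        simp only [inv_one, Equiv.Perm.coe_one, id_eq, hfract]
        have hpos : (0 : ℝ) < (n : ℝ) + 1 := by positivity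
        apply div_lt_div_of_pos_right _ hpos
        have : (a : ℕ) + 1 < (b : ℕ) + 1 := Nat.succ_lt_succ hab
        exact_mod_cast this
    have hle : |cent n h i - cent n h j| ≤ 1 := by
      have := hsub hmem i j hadj
      rwa [hext] at this
    refine ⟨hadj.ne, ?_⟩
    rcases lt_or_gt_of_ne hadj.ne with hij | hij
    · rw [cent_eq_decomp, cent_eq_decomp] at hle ⊢
      exact (key_lt_iff h (centc n) (centc_mono n) (centc_nonneg n) (centc_lt_one n) hij).mpr
        ((key_le_iff h (centc n) (centc_mono n) (centc_nonneg n) (centc_lt_one n) hij).mp hle)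
    · rw [abs_sub_comm] at hle ⊢
      rw [cent_eq_decomp, cent_eq_decomp] at hle ⊢
      exact (key_lt_iff h (centc n) (centc_mono n) (centc_nonneg n) (centc_lt_one n) hij).mpr
        ((key_le_iff h (centc n) (centc_mono n) (centc_nonneg n) (centc_lt_one n) hij).mp hle)
  · -- backward
    intro hle
    apply closure_minimal _ (isClosed_PiG n G)
    rintro y ⟨hfl, hpos, hsm⟩ i j hadj
    obtain ⟨hne, hlt⟩ := hle hadj
    simp only [inv_one, Equiv.Perm.coe_one, id_eq] at hpos hsm
    set f : Fin (n + 1) → ℝ := extv fun k => Int.fract (y k) with hf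
    have hdecomp : ∀ i : Fin (n + 1), extv y i = ((extv h i : ℤ) : ℝ) + f i := by
      intro i
      induction i using Fin.cases with
      | zero => simp [extv, hf]
      | succ k =>
        simp only [extv, Fin.cases_succ, hf]
        rw [← hfl k, Int.floor_add_fract]
    have hmono : StrictMono f := by
      intro a b hab
      induction a using Fin.cases with
      | zero =>
        induction b using Fin.cases with
        | zero => exact absurd hab (lt_irrefl _)
        | succ l => simpa [hf, extv] using hpos l
      | succ k =>
        induction b using Fin.cases with
        | zero => exact absurd hab (Fin.not_lt_zero _)
        | succ l =>
          have hkl : k < l := Fin.succ_lt_succ_iff.mp hab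
          simpa [hf, extv] using hsm hkl
    have h0 : ∀ k, 0 ≤ f k := by
      intro k
      induction k using Fin.cases with
      | zero => simp [hf, extv]
      | succ l => simp [hf, extv]
    have h1 : ∀ k, f k < 1 := by
      intro k
      induction k using Fin.cases with
      | zero => simp [hf, extv]
      | succ l => simpa [hf, extv] using Int.fract_lt_one (y l)
    rcases lt_or_gt_of_ne hne with hij | hij
    · rw [cent_eq_decomp, cent_eq_decomp] at hlt
      rw [hdecomp i, hdecomp j]
      exact (key_le_iff h f hmono h0 h1 hij).mpr
        ((key_lt_iff h (centc n) (centc_mono n) (centc_nonneg n) (centc_lt_one n) hij).mp hlt)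
    · rw [abs_sub_comm] at hlt ⊢
      rw [cent_eq_decomp, cent_eq_decomp] at hlt
      rw [hdecomp i, hdecomp j]
      exact (key_le_iff h f hmono h0 h1 hij).mpr
        ((key_lt_iff h (centc n) (centc_mono n) (centc_nonneg n) (centc_lt_one n) hij).mp hlt)
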